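/- Suppose dim V = 2m is finite, so that 𝒢 is the set of m-dimensional subspaces of V. Then for any X, Y ∈ 𝒢 there exists Z ∈ 𝒢 with V = X ⊕ Z and V = Y ⊕ Z; consequently, the distant graph on 𝒢 is connected and, for m ≥ 2, has diameter 2. -/

import Mathlib

open Submodule

/-- `X` belongs to the Grassmannian 𝒢: `X` is isomorphic (as a `K`-vector space)
to the quotient `V ⧸ X`, equivalently to one (hence every) complement of `X`. -/
def InG (K V : Type*) [DivisionRing K] [AddCommGroup V] [Module K V]
    (X : Submodule K V) : Prop :=
  Nonempty (X ≃ₗ[K] (V ⧸ X))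

/-- `quotRank K V A B` is the dimension of the quotient space `B / (A ∩ B)`,
where `A ∩ B` is viewed as a subspace of `B`.  For `A ≤ B` this is `dim (B/A)`. -/
noncomputable def quotRank (K V : Type*) [DivisionRing K] [AddCommGroup V] [Module K V]
    (A B : Submodule K V) : Cardinal :=
  Module.rank K (↥B ⧸ (A.comap B.subtype))

/-- `X` and `Y` are adjacent: `dim ((X+Y)/X) = dim ((X+Y)/Y) = 1`. -/
def Adjacent (K V : Type*) [DivisionRing K] [AddCommGroup V] [Module K V]
    (X Y : Submodule K V) : Prop :=
  quotRank K V X (X ⊔ Y) = 1 ∧ quotRank K V Y (X ⊔ Y) = 1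

/-- The distant graph on 𝒢: vertices are the elements of 𝒢, edges the pairs of
(distinct) complementary subspaces. -/
def distantGraph (K V : Type*) [DivisionRing K] [AddCommGroup V] [Module K V] :
    SimpleGraph {X : Submodule K V // InG K V X} where
  Adj X Y := X ≠ Y ∧ IsCompl X.1 Y.1
  symm := ⟨fun _ _ h => ⟨h.1.symm, h.2.symm⟩⟩
  loopless := ⟨fun _ h => h.1 rfl⟩

/-- The Grassmann graph on 𝒢: vertices are the elements of 𝒢, edges the pairs of
adjacent subspaces. -/
def grassmannGraph (K V : Type*) [DivisionRing K] [AddCommGroup V] [Module K V] :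
    SimpleGraph {X : Submodule K V // InG K V X} where
  Adj X Y := Adjacent K V X.1 Y.1
  symm := by
    constructor
    intro X Y h
    obtain ⟨h1, h2⟩ := h
    refine ⟨?_, ?_⟩ <;> rw [sup_comm]
    exacts [h2, h1]
  loopless := by
    constructor
    intro X h
    obtain ⟨h1, -⟩ := h
    rw [quotRank, sup_idem, comap_subtype_self] at h1
    have : Subsingleton (↥X.1 ⧸ (⊤ : Submodule K ↥X.1)) :=
      Submodule.Quotient.subsingleton_iff.mpr rfl
    rw [rank_subsingleton'] at h1
    exact zero_ne_one h1

open Module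

section aux
variable {K V : Type*} [DivisionRing K] [AddCommGroup V] [Module K V]

lemma myExistsNotMemUnion (X Y : Submodule K V) (hX : X ≠ ⊤) (hY : Y ≠ ⊤) :
    ∃ v, v ∉ X ∧ v ∉ Y := by
  obtain ⟨x, hx⟩ : ∃ x, x ∉ X := by
    by_contra h; push_neg at h; exact hX (eq_top_iff.2 fun v _ => h v)
  obtain ⟨y, hy⟩ : ∃ y, y ∉ Y := by
    by_contra h; push_neg at h; exact hY (eq_top_iff.2 fun v _ => h v)
  by_cases hxY : x ∈ Y
  · by_cases hyX : y ∈ X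
    · refine ⟨x + y, fun h => hx ?_, fun h => hy ?_⟩
      · simpa using X.sub_mem h hyX
      · simpa using Y.sub_mem h hxY
    · exact ⟨y, hyX, hy⟩
  · exact ⟨x, hx, hxY⟩

lemma myCommonCompl [FiniteDimensional K V] (n : ℕ) :
    ∀ X Y : Submodule K V, finrank K X + n = finrank K V →
      finrank K Y + n = finrank K V →
      ∃ Z : Submodule K V, finrank K Z = n ∧ X ⊓ Z = ⊥ ∧ Y ⊓ Z = ⊥ := by
  induction n with
  | zero => exact fun X Y _ _ => ⟨⊥, finrank_bot K V, inf_bot_eq _, inf_bot_eq _⟩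
  | succ k ih =>
    intro X Y hX hY
    have hXt : X ≠ ⊤ := by
      rintro rfl; rw [finrank_top] at hX; omega
    have hYt : Y ≠ ⊤ := by
      rintro rfl; rw [finrank_top] at hY; omega
    obtain ⟨v, hvX, hvY⟩ := myExistsNotMemUnion X Y hXt hYt
    have hv0 : v ≠ 0 := fun h => hvX (h ▸ X.zero_mem)
    have hdX : X ⊓ (K ∙ v) = ⊥ := by
      rw [inf_comm]
      exact (Submodule.disjoint_span_singleton' hv0).2 hvX |>.symm.eq_bot
    have hdY : Y ⊓ (K ∙ v) = ⊥ := by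
      rw [inf_comm]
      exact (Submodule.disjoint_span_singleton' hv0).2 hvY |>.symm.eq_bot
    have hsv : finrank K (K ∙ v) = 1 := finrank_span_singleton hv0
    have hrX : finrank K ↥(X ⊔ K ∙ v) = finrank K X + 1 := by
      have := Submodule.finrank_sup_add_finrank_inf_eq X (K ∙ v)
      rw [hdX, finrank_bot, hsv] at this
      omega
    have hrY : finrank K ↥(Y ⊔ K ∙ v) = finrank K Y + 1 := by
      have := Submodule.finrank_sup_add_finrank_inf_eq Y (K ∙ v)
      rw [hdY, finrank_bot, hsv] at this
      omega
    obtain ⟨Z', hZ'r, hZ'X, hZ'Y⟩ := ih (X ⊔ K ∙ v) (Y ⊔ K ∙ v) (by omega) (by omega)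
    have hvZ' : v ∉ Z' := by
      intro h
      have : v ∈ (X ⊔ K ∙ v) ⊓ Z' :=
        ⟨Submodule.mem_sup_right (mem_span_singleton_self v), h⟩
      rw [hZ'X] at this
      exact hv0 this
    have hdZ : Z' ⊓ (K ∙ v) = ⊥ := by
      rw [inf_comm]
      exact (Submodule.disjoint_span_singleton' hv0).2 hvZ' |>.symm.eq_bot
    have key : ∀ (W : Submodule K V), W ⊓ (K ∙ v) = ⊥ → (W ⊔ K ∙ v) ⊓ Z' = ⊥ →
        W ⊓ (Z' ⊔ K ∙ v) = ⊥ := by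
      intro W hW1 hW2
      rw [eq_bot_iff]
      rintro u ⟨huW, huZ⟩
      obtain ⟨z, hz, w, hw, rfl⟩ := Submodule.mem_sup.1 huZ
      obtain ⟨c, rfl⟩ := Submodule.mem_span_singleton.1 hw
      have hz' : z ∈ (W ⊔ K ∙ v) ⊓ Z' := by
        refine ⟨?_, hz⟩
        have : z = (z + c • v) - c • v := by rw [add_sub_cancel_right]
        rw [this]
        exact Submodule.sub_mem _ (Submodule.mem_sup_left huW)
          (Submodule.mem_sup_right (Submodule.smul_mem _ c (mem_span_singleton_self v)))
      rw [hW2] at hz'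
      rw [hz', zero_add] at huW ⊢
      have : c • v ∈ W ⊓ (K ∙ v) :=
        ⟨huW, Submodule.smul_mem _ c (mem_span_singleton_self v)⟩
      rw [hW1] at this
      exact this
    refine ⟨Z' ⊔ K ∙ v, ?_, key X hdX hZ'X, key Y hdY hZ'Y⟩
    have := Submodule.finrank_sup_add_finrank_inf_eq Z' (K ∙ v)
    rw [hdZ, finrank_bot, hsv, hZ'r] at this
    omega

end aux

section aux2
variable {K V : Type*} [DivisionRing K] [AddCommGroup V] [Module K V]

lemma myInGIff [FiniteDimensional K V] (m : ℕ) (h2m : finrank K V = 2 * m)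
    (X : Submodule K V) : InG K V X ↔ finrank K X = m := by
  have h1 := X.finrank_quotient_add_finrank
  constructor
  · rintro ⟨e⟩
    have h2 : finrank K X = finrank K (V ⧸ X) := e.finrank_eq
    omega
  · intro h
    exact FiniteDimensional.nonempty_linearEquiv_of_finrank_eq (by omega)

lemma myIsCompl [FiniteDimensional K V] {X Z : Submodule K V}
    (h : X ⊓ Z = ⊥) (hr : finrank K X + finrank K Z = finrank K V) : IsCompl X Z := by
  have hs := Submodule.finrank_sup_add_finrank_inf_eq X Z
  rw [h, finrank_bot, add_zero] at hs
  exact ⟨disjoint_iff.2 h, codisjoint_iff.2 (Submodule.eq_top_of_finrank_eq (by omega))⟩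

lemma myMain [FiniteDimensional K V] (m : ℕ) (h2m : finrank K V = 2 * m)
    (X Y : Submodule K V) (hX : InG K V X) (hY : InG K V Y) :
    ∃ Z, InG K V Z ∧ IsCompl X Z ∧ IsCompl Y Z := by
  rw [myInGIff m h2m] at hX hY
  obtain ⟨Z, hZr, hZX, hZY⟩ := myCommonCompl m X Y (by omega) (by omega)
  exact ⟨Z, (myInGIff m h2m Z).2 hZr, myIsCompl hZX (by omega), myIsCompl hZY (by omega)⟩

lemma myAllEq {X : Submodule K V} (h : IsCompl X X) (Y W : Submodule K V) : Y = W := by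
  have h1 : X = ⊥ := disjoint_self.1 h.disjoint
  have h2 : X = ⊤ := codisjoint_self.1 h.codisjoint
  have hall : ∀ A : Submodule K V, A = ⊤ := fun A =>
    eq_top_iff.2 (by rw [← h2, h1]; exact bot_le)
  rw [hall Y, hall W]

lemma myPath [FiniteDimensional K V] (m : ℕ) (h2m : finrank K V = 2 * m)
    (u v : {X : Submodule K V // InG K V X}) (hne : u ≠ v) :
    ∃ z, (distantGraph K V).Adj u z ∧ (distantGraph K V).Adj z v := by
  obtain ⟨Z, hZ, hXZ, hYZ⟩ := myMain m h2m u.1 v.1 u.2 v.2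
  refine ⟨⟨Z, hZ⟩, ⟨fun h => ?_, hXZ⟩, ⟨fun h => ?_, hYZ.symm⟩⟩
  · have : u.1 = Z := congrArg Subtype.val h
    rw [← this] at hXZ
    exact hne (Subtype.ext (myAllEq hXZ u.1 v.1))
  · have : Z = v.1 := congrArg Subtype.val h
    rw [this] at hYZ
    exact hne (Subtype.ext (myAllEq hYZ u.1 v.1))

end aux2

lemma mySpanAux {K V : Type*} [DivisionRing K] [AddCommGroup V] [Module K V]
    [FiniteDimensional K V] {n : ℕ} (b : Basis (Fin n) K V) {m : ℕ} (g : Fin m → Fin n)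
    (hg : Function.Injective g) :
    finrank K (span K (⇑b '' Set.range g)) = m ∧
    ∀ i, b i ∈ span K (⇑b '' Set.range g) ↔ i ∈ Set.range g := by
  constructor
  · rw [← Set.range_comp, finrank_span_eq_card (b.linearIndependent.comp g hg),
      Fintype.card_fin]
  · intro i; exact b.self_mem_span_image

/-- For `dim V = 2m` finite (so that 𝒢 is the set of `m`-dimensional subspaces):
any `X, Y ∈ 𝒢` have a common complement `Z ∈ 𝒢`; consequently the distant graph
is connected and, for `m ≥ 2`, has diameter `2`. -/
theorem stmt_15 (K V : Type*) [DivisionRing K] [AddCommGroup V] [Module K V]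
    (m : ℕ) (hV : Module.rank K V = (2 * m : ℕ)) :
    (∀ X : Submodule K V, InG K V X ↔ Module.rank K X = (m : ℕ)) ∧
    (∀ X Y : Submodule K V, InG K V X → InG K V Y →
      ∃ Z : Submodule K V, InG K V Z ∧ IsCompl X Z ∧ IsCompl Y Z) ∧
    (distantGraph K V).Connected ∧
    (2 ≤ m → (distantGraph K V).diam = 2) := by
  have hfin : FiniteDimensional K V := Module.finite_of_rank_eq_nat hV
  have h2m : finrank K V = 2 * m := finrank_eq_of_rank_eq hV
  let b : Basis (Fin (2 * m)) K V := Module.finBasisOfFinrankEq K V h2m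
  have part1 : ∀ X : Submodule K V, InG K V X ↔ Module.rank K X = (m : ℕ) := by
    intro X
    rw [myInGIff m h2m X, ← finrank_eq_rank K ↥X, Nat.cast_inj]
  have part2 : ∀ X Y : Submodule K V, InG K V X → InG K V Y →
      ∃ Z : Submodule K V, InG K V Z ∧ IsCompl X Z ∧ IsCompl Y Z :=
    fun X Y hX hY => myMain m h2m X Y hX hY
  -- a vertex always exists
  have gXinj : Function.Injective (fun j : Fin m => (⟨j.1, by omega⟩ : Fin (2 * m))) := by
    intro a c h
    have h' := congrArg Fin.val h
    exact Fin.ext h'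
  obtain ⟨hX₀r, hX₀mem⟩ := mySpanAux b _ gXinj
  have hX₀G : InG K V (span K (⇑b '' Set.range
      (fun j : Fin m => (⟨j.1, by omega⟩ : Fin (2 * m))))) :=
    (myInGIff m h2m _).2 hX₀r
  have hnonempty : Nonempty {X : Submodule K V // InG K V X} := ⟨⟨_, hX₀G⟩⟩
  have hconn : (distantGraph K V).Connected := by
    refine SimpleGraph.Connected.mk ?_
    intro u v
    rcases eq_or_ne u v with rfl | huv
    · exact SimpleGraph.Reachable.refl u
    · obtain ⟨z, h1, h2⟩ := myPath m h2m u v huv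
      exact h1.reachable.trans h2.reachable
  refine ⟨part1, part2, hconn, fun hm => ?_⟩
  -- upper bound on the extended diameter
  have hub : ∀ u v : {X : Submodule K V // InG K V X},
      (distantGraph K V).edist u v ≤ 2 := by
    intro u v
    rcases eq_or_ne u v with rfl | huv
    · simp [SimpleGraph.edist_self]
    · obtain ⟨z, h1, h2⟩ := myPath m h2m u v huv
      calc (distantGraph K V).edist u v
          ≤ (distantGraph K V).edist u z + (distantGraph K V).edist z v :=
            SimpleGraph.edist_triangle
        _ = 1 + 1 := by
            rw [SimpleGraph.edist_eq_one_iff_adj.2 h1, SimpleGraph.edist_eq_one_iff_adj.2 h2]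
        _ = 2 := by norm_num
  -- the two model vertices at distance 2
  have hm0 : 0 < m := by omega
  set gY : Fin m → Fin (2 * m) := fun j =>
    ⟨if j.1 = 0 then 0 else m + j.1 - 1, by rcases j with ⟨j, hj⟩; dsimp; split <;> omega⟩
    with hgY
  have gYinj : Function.Injective gY := by
    intro a c h
    have h' : (if a.1 = 0 then 0 else m + a.1 - 1) = (if c.1 = 0 then 0 else m + c.1 - 1) :=
      congrArg Fin.val h
    have ha := a.2; have hc := c.2
    apply Fin.ext
    split at h' <;> split at h' <;> omega
  obtain ⟨hY₀r, hY₀mem⟩ := mySpanAux b gY gYinj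
  have hY₀G : InG K V (span K (⇑b '' Set.range gY)) := (myInGIff m h2m _).2 hY₀r
  set u₀ : {X : Submodule K V // InG K V X} := ⟨_, hX₀G⟩ with hu₀
  set v₀ : {X : Submodule K V // InG K V X} := ⟨_, hY₀G⟩ with hv₀
  -- the two spans are distinct: b ⟨1⟩ separates them
  have hXY : u₀.1 ≠ v₀.1 := by
    intro h
    have h1X : b ⟨1, by omega⟩ ∈ u₀.1 := (hX₀mem _).2 ⟨⟨1, by omega⟩, rfl⟩
    have h1Y : b ⟨1, by omega⟩ ∉ v₀.1 := by
      intro hmem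
      obtain ⟨j, hj⟩ := (hY₀mem _).1 hmem
      have hj' : (if j.1 = 0 then 0 else m + j.1 - 1) = 1 := congrArg Fin.val hj
      have hjlt := j.2
      split at hj' <;> omega
    exact h1Y (h ▸ h1X)
  -- they are not complementary: b ⟨0⟩ lies in both
  have hnc : ¬IsCompl u₀.1 v₀.1 := by
    intro h
    have h0X : b ⟨0, by omega⟩ ∈ u₀.1 := (hX₀mem _).2 ⟨⟨0, hm0⟩, rfl⟩
    have h0Y : b ⟨0, by omega⟩ ∈ v₀.1 := by
      refine (hY₀mem _).2 ⟨⟨0, hm0⟩, ?_⟩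
      apply Fin.ext
      simp [hgY]
    have hb0 : b ⟨0, by omega⟩ ∈ u₀.1 ⊓ v₀.1 := ⟨h0X, h0Y⟩
    rw [h.inf_eq_bot] at hb0
    exact b.ne_zero _ hb0
  have hu₀v₀ : u₀ ≠ v₀ := fun h => hXY (congrArg Subtype.val h)
  have hekey : (distantGraph K V).edist u₀ v₀ = 2 := by
    have h0 : (distantGraph K V).edist u₀ v₀ ≠ 0 :=
      fun h => hu₀v₀ (SimpleGraph.edist_eq_zero_iff.1 h)
    have h1 : (distantGraph K V).edist u₀ v₀ ≠ 1 := by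
      intro h
      exact hnc (SimpleGraph.edist_eq_one_iff_adj.1 h).2
    refine le_antisymm (hub u₀ v₀) ?_
    have hlt1 : 1 < (distantGraph K V).edist u₀ v₀ :=
      lt_of_le_of_ne (ENat.one_le_iff_ne_zero.2 h0) (Ne.symm h1)
    calc (2 : ℕ∞) = 1 + 1 := by norm_num
      _ ≤ _ := Order.add_one_le_of_lt hlt1
  have hediam : (distantGraph K V).ediam = 2 := by
    refine le_antisymm (SimpleGraph.ediam_le_of_edist_le hub) ?_
    rw [← hekey]
    exact SimpleGraph.edist_le_ediam
  have : (distantGraph K V).diam = ((distantGraph K V).ediam).toNat := rfl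
  rw [this, hediam]
  rfl
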